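/- Let B be a reduced abelian p-group, S a finite subgroup of B, and β an ordinal such that u_β(B) is finite. If there exists an element w ∈ P_β(B) of height exactly β which is proper with respect to S, then the dimension of the ℤ/pℤ-vector space (S ∩ B_β ∩ p^{-1}B_{β+2})/(S ∩ B_{β+1}) is strictly less than u_β(B). -/

import Mathlib

open Ordinal

/-- Scalar multiplication by `p` as an additive group homomorphism. -/
def pHom (p : ℕ) (G : Type*) [AddCommGroup G] : G →+ G :=
  AddMonoidHom.mk' (fun x => p • x) (fun a b => smul_add p a b)

@[simp] lemma pHom_apply (p : ℕ) {G : Type*} [AddCommGroup G] (x : G) :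
    pHom p G x = p • x := rfl

/-- The Ulm subgroups `G_β`: `G_0 = G`, `G_{β+1} = pG_β`, and intersections at limits. -/
noncomputable def ulmSub (p : ℕ) (G : Type*) [AddCommGroup G] (β : Ordinal.{0}) :
    AddSubgroup G :=
  Ordinal.limitRecOn β ⊤ (fun _ H => AddSubgroup.map (pHom p G) H)
    (fun o _ ih => ⨅ (γ : Ordinal.{0}) (h : γ < o), ih γ h)

lemma ulmSub_succ (p : ℕ) (G : Type*) [AddCommGroup G] (β : Ordinal.{0}) :
    ulmSub p G (β + 1) = AddSubgroup.map (pHom p G) (ulmSub p G β) := by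
  unfold ulmSub
  rw [Ordinal.add_one_eq_succ, Ordinal.limitRecOn_succ]

lemma ulmSub_succ_le (p : ℕ) (G : Type*) [AddCommGroup G] (β : Ordinal.{0}) :
    ulmSub p G (β + 1) ≤ ulmSub p G β := by
  rw [ulmSub_succ]
  rintro x ⟨y, hy, rfl⟩
  simpa using (ulmSub p G β).nsmul_mem hy p

/-- An abelian `p`-group: every element is killed by some power of `p`. -/
def IsAbelianPGroup (p : ℕ) (G : Type*) [AddCommGroup G] : Prop :=
  ∀ x : G, ∃ n : ℕ, p ^ n • x = 0

/-- The length `λ(G)`: the least ordinal `β` with `G_β = G_{β+1}`. -/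
noncomputable def ulmLength (p : ℕ) (G : Type*) [AddCommGroup G] : Ordinal.{0} :=
  sInf {β : Ordinal.{0} | ulmSub p G β = ulmSub p G (β + 1)}

/-- `G` is reduced if `G_{λ(G)} = {0}`. -/
def IsReducedPGroup (p : ℕ) (G : Type*) [AddCommGroup G] : Prop :=
  ulmSub p G (ulmLength p G) = ⊥

/-- `P_β(G) = {x ∈ G_β : px = 0}`. -/
noncomputable def ulmP (p : ℕ) (G : Type*) [AddCommGroup G] (β : Ordinal.{0}) : AddSubgroup G :=
  (pHom p G).ker ⊓ ulmSub p G β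

/-- The quotient `P_β(G)/P_{β+1}(G)` (as a quotient of `P_β(G)` by the subgroup
corresponding to `P_{β+1}(G)`). -/
noncomputable def ulmQuot (p : ℕ) (G : Type*) [AddCommGroup G] (β : Ordinal.{0}) :=
  (ulmP p G β) ⧸ ((ulmP p G (β + 1)).addSubgroupOf (ulmP p G β))

noncomputable instance (p : ℕ) (G : Type*) [AddCommGroup G] (β : Ordinal.{0}) :
    AddCommGroup (ulmQuot p G β) :=
  inferInstanceAs (AddCommGroup ((ulmP p G β) ⧸ ((ulmP p G (β + 1)).addSubgroupOf (ulmP p G β))))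

noncomputable instance (p : ℕ) (G : Type*) [AddCommGroup G] (β : Ordinal.{0}) :
    Module (ZMod p) (ulmQuot p G β) :=
  QuotientAddGroup.zmodModule (by
    intro x
    simp only [AddSubgroup.mem_addSubgroupOf]
    have hx : ((p • x : ulmP p G β) : G) = 0 := by
      have := (AddSubgroup.mem_inf.mp x.2).1
      rw [AddMonoidHom.mem_ker, pHom_apply] at this
      simpa using this
    rw [hx]
    exact (ulmP p G (β + 1)).zero_mem)

/-- The Ulm invariant `u_β(G)`: the dimension of `P_β(G)/P_{β+1}(G)` over `ℤ/pℤ`. -/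
noncomputable def ulmInvariant (p : ℕ) (G : Type*) [AddCommGroup G] (β : Ordinal.{0}) :
    Cardinal :=
  Module.rank (ZMod p) (ulmQuot p G β)

open Classical in
/-- The height of `x`: the unique ordinal `β` with `x ∈ G_β \ G_{β+1}` if it exists, and `∞`
(= `⊤`) otherwise. -/
noncomputable def height (p : ℕ) {G : Type*} [AddCommGroup G] (x : G) : WithTop Ordinal.{0} :=
  if ∃ β : Ordinal.{0}, x ∈ ulmSub p G β ∧ x ∉ ulmSub p G (β + 1) then
    ((sInf {β : Ordinal.{0} | x ∈ ulmSub p G β ∧ x ∉ ulmSub p G (β + 1)} : Ordinal.{0}) :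
      WithTop Ordinal.{0})
  else ⊤

/-- `d` is proper with respect to `S` if `h(d) ≥ h(d+s)` for every `s ∈ S`. -/
def ProperWRT (p : ℕ) {G : Type*} [AddCommGroup G] (S : AddSubgroup G) (d : G) : Prop :=
  ∀ s ∈ S, height p (d + s) ≤ height p d

/-- The subgroup `S ∩ B_β ∩ p⁻¹B_{β+2}`, where `p⁻¹B_{β+2} = {x : px ∈ B_{β+2}}`. -/
noncomputable def kapSub (p : ℕ) {B : Type*} [AddCommGroup B] (S : AddSubgroup B)
    (β : Ordinal.{0}) : AddSubgroup B :=
  S ⊓ ulmSub p B β ⊓ (ulmSub p B (β + 2)).comap (pHom p B)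

/-- The quotient `(S ∩ B_β ∩ p⁻¹B_{β+2}) / (S ∩ B_{β+1})`. -/
noncomputable def kapQuot (p : ℕ) {B : Type*} [AddCommGroup B] (S : AddSubgroup B)
    (β : Ordinal.{0}) :=
  kapSub p S β ⧸ ((S ⊓ ulmSub p B (β + 1)).addSubgroupOf (kapSub p S β))

noncomputable instance (p : ℕ) {B : Type*} [AddCommGroup B] (S : AddSubgroup B)
    (β : Ordinal.{0}) : AddCommGroup (kapQuot p S β) :=
  inferInstanceAs
    (AddCommGroup (kapSub p S β ⧸ ((S ⊓ ulmSub p B (β + 1)).addSubgroupOf (kapSub p S β))))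

noncomputable instance (p : ℕ) {B : Type*} [AddCommGroup B] (S : AddSubgroup B)
    (β : Ordinal.{0}) : Module (ZMod p) (kapQuot p S β) :=
  QuotientAddGroup.zmodModule (by
    intro x
    have hx := x.2
    simp only [kapSub, AddSubgroup.mem_inf, AddSubgroup.mem_comap, pHom_apply] at hx
    simp only [AddSubgroup.mem_addSubgroupOf, AddSubgroup.mem_inf]
    have hc : ((p • x : kapSub p S β) : B) = p • (x : B) := rfl
    rw [hc]
    refine ⟨S.nsmul_mem hx.1.1 p, ?_⟩
    have h2 : (β + 2 : Ordinal.{0}) = (β + 1) + 1 := by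
      rw [add_assoc]; norm_num
    exact ulmSub_succ_le p B (β + 1) (by rw [← h2]; exact hx.2))

lemma ulmSub_limit (p : ℕ) (G : Type*) [AddCommGroup G] {o : Ordinal.{0}} (h : Order.IsSuccLimit o) :
    ulmSub p G o = ⨅ (γ : Ordinal.{0}) (_ : γ < o), ulmSub p G γ := by
  unfold ulmSub
  rw [Ordinal.limitRecOn_limit _ _ _ _ h]

lemma ulmSub_anti (p : ℕ) (G : Type*) [AddCommGroup G] :
    ∀ (δ γ : Ordinal.{0}), γ ≤ δ → ulmSub p G δ ≤ ulmSub p G γ := by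
  intro δ
  induction δ using Ordinal.induction with
  | h δ ih =>
    intro γ hle
    rcases eq_or_lt_of_le hle with rfl | hlt
    · exact le_rfl
    rcases Ordinal.zero_or_succ_or_isSuccLimit δ with rfl | ⟨ξ, rfl⟩ | hlim
    · exact absurd hlt (not_lt_of_ge (zero_le (a := γ)))
    · have hγξ : γ ≤ ξ := Order.lt_succ_iff.mp hlt
      have h1 : ulmSub p G (Order.succ ξ) ≤ ulmSub p G ξ := by
        rw [← Ordinal.add_one_eq_succ]
        exact ulmSub_succ_le p G ξ
      exact h1.trans (ih ξ (Order.lt_succ ξ) γ hγξ)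
    · rw [ulmSub_limit p G hlim]
      exact iInf₂_le γ hlt

lemma height_le_of_mem_notmem (p : ℕ) {G : Type*} [AddCommGroup G] {x : G} {β : Ordinal.{0}}
    (h1 : x ∈ ulmSub p G β) (h2 : x ∉ ulmSub p G (β + 1)) :
    height p x ≤ (β : WithTop Ordinal.{0}) := by
  rw [height, if_pos ⟨β, h1, h2⟩]
  exact WithTop.coe_le_coe.mpr (csInf_le (OrderBot.bddBelow _) ⟨h1, h2⟩)

lemma not_height_le_of_mem (p : ℕ) {G : Type*} [AddCommGroup G] {x : G} {β : Ordinal.{0}}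
    (h : x ∈ ulmSub p G (β + 1)) : ¬ height p x ≤ (β : WithTop Ordinal.{0}) := by
  rw [height]
  split_ifs with hex
  · intro hle
    rw [WithTop.coe_le_coe] at hle
    have hne : {γ : Ordinal.{0} | x ∈ ulmSub p G γ ∧ x ∉ ulmSub p G (γ + 1)}.Nonempty := hex
    have hmem := csInf_mem hne
    refine hmem.2 (ulmSub_anti p G (β + 1) _ ?_ h)
    exact add_le_add hle le_rfl
  · simp

/-- If `u_β(B)` is finite and `P_β(B)` contains an element of height exactly `β` proper with
respect to the finite subgroup `S`, then
`dim (S ∩ B_β ∩ p⁻¹B_{β+2})/(S ∩ B_{β+1}) < u_β(B)`. -/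
theorem kaplansky_dim_lt (p : ℕ) (hp : p.Prime) (B : Type) [AddCommGroup B]
    (hB : IsAbelianPGroup p B) (hred : IsReducedPGroup p B)
    (S : AddSubgroup B) (hS : (S : Set B).Finite) (β : Ordinal.{0})
    (hfin : ulmInvariant p B β < Cardinal.aleph0)
    (hw : ∃ w ∈ ulmP p B β, (w ∈ ulmSub p B β ∧ w ∉ ulmSub p B (β + 1)) ∧ ProperWRT p S w) :
    Module.rank (ZMod p) (kapQuot p S β) < ulmInvariant p B β := by
  classical
  obtain ⟨w, hwP, ⟨hwβ, hwβ1⟩, hprop⟩ := hw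
  haveI : Fact p.Prime := ⟨hp⟩
  set K := kapSub p S β with hKdef
  have hmemS : ∀ s : K, (s : B) ∈ S := fun s => s.2.1.1
  have hmemβ : ∀ s : K, (s : B) ∈ ulmSub p B β := fun s => s.2.1.2
  have hmap : ∀ s : K, ∃ u : B, u ∈ ulmSub p B (β + 1) ∧ p • u = p • (s : B) := by
    intro s
    have hs : pHom p B (s : B) ∈ ulmSub p B (β + 2) := s.2.2
    have h2 : (β + 2 : Ordinal.{0}) = (β + 1) + 1 := by rw [add_assoc]; norm_num
    rw [h2, ulmSub_succ] at hs
    obtain ⟨u, hu, hpu⟩ := hs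
    exact ⟨u, hu, by simpa using hpu⟩
  choose t ht1 ht2 using hmap
  have hsub1 : ulmSub p B (β + 1) ≤ ulmSub p B β := ulmSub_succ_le p B β
  have heP : ∀ s : K, (s : B) - t s ∈ ulmP p B β := by
    intro s
    refine AddSubgroup.mem_inf.mpr ⟨?_, ?_⟩
    · show pHom p B ((s : B) - t s) = 0
      simp [smul_sub, ht2 s]
    · exact sub_mem (hmemβ s) (hsub1 (ht1 s))
  let e : K → ulmP p B β := fun s => ⟨(s : B) - t s, heP s⟩
  set N := (S ⊓ ulmSub p B (β + 1)).addSubgroupOf K with hNdef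
  -- key membership lemma for P_{β+1}
  have hPmem : ∀ x : B, pHom p B x = 0 → x ∈ ulmSub p B (β + 1) → x ∈ ulmP p B (β + 1) :=
    fun x h1 h2 => AddSubgroup.mem_inf.mpr ⟨h1, h2⟩
  have wd : ∀ a b : K, QuotientAddGroup.leftRel N a b →
      (QuotientAddGroup.mk (e a) : ulmQuot p B β) = QuotientAddGroup.mk (e b) := by
    intro a b hab
    rw [QuotientAddGroup.leftRel_apply] at hab
    rw [AddSubgroup.mem_addSubgroupOf] at hab
    have hab1 : ((-a + b : K) : B) = (b : B) - (a : B) := by push_cast; abel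
    rw [hab1] at hab
    rw [QuotientAddGroup.eq]
    rw [AddSubgroup.mem_addSubgroupOf]
    have hval : ((-(e a) + e b : ulmP p B β) : B)
        = ((b : B) - (a : B)) - (t b - t a) := by
      show -((a : B) - t a) + ((b : B) - t b) = _
      abel
    rw [hval]
    refine hPmem _ ?_ ?_
    · show p • (((b : B) - (a : B)) - (t b - t a)) = 0
      have h2a := ht2 a; have h2b := ht2 b
      rw [smul_sub, smul_sub, smul_sub, h2a, h2b]
      abel
    · exact sub_mem hab.2 (sub_mem (ht1 b) (ht1 a))
  let f : kapQuot p S β → ulmQuot p B β :=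
    fun q => Quotient.lift (fun s : K => (QuotientAddGroup.mk (e s) : ulmQuot p B β))
      (fun a b h => wd a b h) q
  have hf_mk : ∀ a : K, f (QuotientAddGroup.mk a) = QuotientAddGroup.mk (e a) :=
    fun a => rfl
  have hinj : Function.Injective f := by
    intro x y
    refine QuotientAddGroup.induction_on x ?_
    intro a
    refine QuotientAddGroup.induction_on y ?_
    intro b hab
    rw [hf_mk, hf_mk] at hab
    replace hab := QuotientAddGroup.eq.mp hab
    rw [AddSubgroup.mem_addSubgroupOf] at hab
    have hval : ((-(e a) + e b : ulmP p B β) : B)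
        = ((b : B) - (a : B)) - (t b - t a) := by
      show -((a : B) - t a) + ((b : B) - t b) = _
      abel
    rw [hval] at hab
    obtain ⟨-, hab2⟩ := AddSubgroup.mem_inf.mp hab
    have hba : (b : B) - (a : B) ∈ ulmSub p B (β + 1) := by
      have := add_mem hab2 (sub_mem (ht1 b) (ht1 a))
      simpa using this
    refine QuotientAddGroup.eq.mpr ?_
    rw [AddSubgroup.mem_addSubgroupOf]
    have hco : ((-a + b : K) : B) = (b : B) - (a : B) := by push_cast; abel
    rw [hco]
    exact AddSubgroup.mem_inf.mpr ⟨sub_mem (hmemS b) (hmemS a), hba⟩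
  set wq : ulmQuot p B β := QuotientAddGroup.mk ⟨w, hwP⟩ with hwq
  have hmiss : wq ∉ Set.range f := by
    rintro ⟨x, hx⟩
    revert hx
    refine QuotientAddGroup.induction_on x ?_
    intro a hx
    rw [hf_mk, hwq] at hx
    replace hx := QuotientAddGroup.eq.mp hx
    rw [AddSubgroup.mem_addSubgroupOf] at hx
    have hval : ((-(e a) + ⟨w, hwP⟩ : ulmP p B β) : B)
        = (w + -(a : B)) + t a := by
      show -((a : B) - t a) + w = _
      abel
    rw [hval] at hx
    obtain ⟨-, hx2⟩ := AddSubgroup.mem_inf.mp hx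
    have hmem : w + -(a : B) ∈ ulmSub p B (β + 1) := by
      have := sub_mem hx2 (ht1 a)
      simpa using this
    have h1 : height p (w + -(a : B)) ≤ height p w :=
      hprop _ (neg_mem (hmemS a))
    have h2 : height p w ≤ (β : WithTop Ordinal.{0}) :=
      height_le_of_mem_notmem p hwβ hwβ1
    exact not_height_le_of_mem p hmem (h1.trans h2)
  -- finiteness
  have hKfinite : Finite K := by
    have hsubset : (K : Set B) ⊆ (S : Set B) := fun x hx => hx.1.1
    exact (hS.subset hsubset).to_subtype
  haveI := hKfinite
  haveI hQfin : Finite (kapQuot p S β) := Quotient.finite _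
  haveI hnoe : IsNoetherian (ZMod p) (ulmQuot p B β) :=
    IsNoetherian.iff_rank_lt_aleph0.mpr hfin
  haveI : Module.Finite (ZMod p) (ulmQuot p B β) := Module.IsNoetherian.finite _ _
  haveI : Finite (ulmQuot p B β) := Module.finite_of_finite (ZMod p)
  haveI : Module.Finite (ZMod p) (kapQuot p S β) :=
    Module.finite_iff_finite.mpr hQfin
  haveI : Fintype (kapQuot p S β) := Fintype.ofFinite _
  haveI : Fintype (ulmQuot p B β) := Fintype.ofFinite _
  have hcard : Fintype.card (kapQuot p S β) < Fintype.card (ulmQuot p B β) :=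
    Fintype.card_lt_of_injective_of_notMem f hinj hmiss
  rw [Module.card_eq_pow_finrank (K := ZMod p) (V := kapQuot p S β),
    Module.card_eq_pow_finrank (K := ZMod p) (V := ulmQuot p B β)] at hcard
  have hcardZ : Fintype.card (ZMod p) = p := ZMod.card p
  rw [hcardZ] at hcard
  have hrk : Module.finrank (ZMod p) (kapQuot p S β)
      < Module.finrank (ZMod p) (ulmQuot p B β) :=
    (Nat.pow_lt_pow_iff_right hp.one_lt).mp hcard
  have e1 : (Module.finrank (ZMod p) (kapQuot p S β) : Cardinal)
      = Module.rank (ZMod p) (kapQuot p S β) := Module.finrank_eq_rank _ _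
  have e2 : (Module.finrank (ZMod p) (ulmQuot p B β) : Cardinal)
      = Module.rank (ZMod p) (ulmQuot p B β) := Module.finrank_eq_rank _ _
  show Module.rank (ZMod p) (kapQuot p S β) < Module.rank (ZMod p) (ulmQuot p B β)
  rw [← e1, ← e2]
  exact_mod_cast hrk
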